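/- Let D be a Prüfer domain and ℓ a length function on D. Suppose P' ⊊ P are prime ideals of D and there exists a P-primary ideal Q with ℓ(D/Q) > 0. Then ℓ(D/P') = ∞. -/

import Mathlib

open scoped ENNReal

universe u

structure LengthFunction (R : Type u) [CommRing R] where
  toFun : ∀ (M : Type u) [AddCommGroup M] [Module R M], ℝ≥0∞
  zero' : ∀ (M : Type u) [AddCommGroup M] [Module R M], Subsingleton M → toFun M = 0
  additive : ∀ (M₁ M₂ M₃ : Type u) [AddCommGroup M₁] [Module R M₁]
      [AddCommGroup M₂] [Module R M₂] [AddCommGroup M₃] [Module R M₃]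
      (f : M₁ →ₗ[R] M₂) (g : M₂ →ₗ[R] M₃),
      Function.Injective f → Function.Surjective g →
      LinearMap.range f = LinearMap.ker g →
      toFun M₂ = toFun M₁ + toFun M₃
  upperContinuous : ∀ (M : Type u) [AddCommGroup M] [Module R M],
      toFun M = ⨆ (N : Submodule R M) (_ : N.FG), toFun N

/-- A Prüfer domain: the localization at every prime ideal is a valuation domain. -/
def IsPruferDomain (D : Type u) [CommRing D] [IsDomain D] : Prop :=
  ∀ (P : Ideal D) (hP : P.IsPrime), haveI := hP; ValuationRing (Localization.AtPrime P)

/-- A length function is invariant under linear isomorphism. -/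
lemma LengthFunction.congr {D : Type u} [CommRing D] (ℓ : LengthFunction D)
    {M₁ M₂ : Type u} [AddCommGroup M₁] [Module D M₁] [AddCommGroup M₂] [Module D M₂]
    (e : M₁ ≃ₗ[D] M₂) : ℓ.toFun M₁ = ℓ.toFun M₂ := by
  have h := ℓ.additive M₁ M₂ PUnit.{u+1} e.toLinearMap 0 e.injective
    (fun x => ⟨0, Subsingleton.elim _ _⟩)
    (by rw [LinearMap.ker_zero]; exact LinearMap.range_eq_top.2 e.surjective)
  rw [ℓ.zero' PUnit.{u+1} inferInstance, add_zero] at h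
  exact h.symm

/-- Additivity of a length function over the exact sequence `0 → I/J → D/J → D/I → 0`. -/
lemma LengthFunction.quot_eq {D : Type u} [CommRing D] (ℓ : LengthFunction D)
    (J I : Ideal D) (h : J ≤ I) :
    ℓ.toFun (D ⧸ J) = ℓ.toFun ↥(Submodule.map J.mkQ I) + ℓ.toFun (D ⧸ I) := by
  refine ℓ.additive _ _ _ (Submodule.subtype _) (Submodule.mapQ J I LinearMap.id h)
    (Submodule.injective_subtype _) ?_ ?_
  · intro x
    obtain ⟨d, rfl⟩ := Submodule.mkQ_surjective I x
    exact ⟨J.mkQ d, rfl⟩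
  · rw [Submodule.range_subtype, Submodule.mapQ, Submodule.ker_liftQ]
    congr 1
    simp [LinearMap.ker_comp, Submodule.ker_mkQ]

lemma LengthFunction.quot_mono {D : Type u} [CommRing D] (ℓ : LengthFunction D)
    (J I : Ideal D) (h : J ≤ I) : ℓ.toFun (D ⧸ I) ≤ ℓ.toFun (D ⧸ J) := by
  rw [ℓ.quot_eq J I h]; exact le_add_self

/-- The colon computation: `((a^(n+1)) + P') : a^n = (a) + P'` for `P'` prime, `a ∉ P'`. -/
lemma colon_mem {D : Type u} [CommRing D] {P' : Ideal D} (hP' : P'.IsPrime)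
    {a : D} (ha : a ∉ P') (n : ℕ) {x : D} :
    a ^ n * x ∈ Ideal.span {a ^ (n + 1)} ⊔ P' ↔ x ∈ Ideal.span {a} ⊔ P' := by
  constructor
  · intro hx
    obtain ⟨y, hy, p, hp, hxy⟩ := Submodule.mem_sup.1 hx
    obtain ⟨c, rfl⟩ := Ideal.mem_span_singleton'.1 hy
    have h1 : a ^ n * (x - c * a) ∈ P' := by
      have : a ^ n * (x - c * a) = p := by linear_combination -hxy
      rwa [this]
    have h2 : x - c * a ∈ P' := by
      rcases hP'.mem_or_mem h1 with h | h
      · exact absurd (hP'.mem_of_pow_mem n h) ha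
      · exact h
    exact Submodule.mem_sup.2 ⟨c * a, Ideal.mem_span_singleton'.2 ⟨c, rfl⟩, x - c * a, h2, by ring⟩
  · intro hx
    obtain ⟨y, hy, p, hp, rfl⟩ := Submodule.mem_sup.1 hx
    obtain ⟨c, rfl⟩ := Ideal.mem_span_singleton'.1 hy
    exact Submodule.mem_sup.2 ⟨c * a ^ (n + 1), Ideal.mem_span_singleton'.2 ⟨c, rfl⟩,
      a ^ n * p, P'.mul_mem_left _ hp, by ring⟩

/-- The isomorphism `((a^n) + P')/((a^(n+1)) + P') ≃ D/((a) + P')` given by multiplication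
by `a^n`. -/
noncomputable def stepEquiv {D : Type u} [CommRing D] {P' : Ideal D} (hP' : P'.IsPrime)
    {a : D} (ha : a ∉ P') (n : ℕ) :
    (D ⧸ (Ideal.span {a} ⊔ P')) ≃ₗ[D]
      ↥(Submodule.map (Ideal.span {a ^ (n + 1)} ⊔ P').mkQ (Ideal.span {a ^ n} ⊔ P')) := by
  set Jn1 : Ideal D := Ideal.span {a ^ (n + 1)} ⊔ P'
  set φ : D →ₗ[D] D ⧸ Jn1 := Jn1.mkQ.comp ((LinearMap.lsmul D D) (a ^ n))
  have hker : LinearMap.ker φ = Ideal.span {a} ⊔ P' := by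
    ext x
    simp only [φ, LinearMap.mem_ker, LinearMap.comp_apply, LinearMap.lsmul_apply,
      smul_eq_mul, Submodule.mkQ_apply, Submodule.Quotient.mk_eq_zero]
    exact colon_mem hP' ha n
  have hrange : LinearMap.range φ = Submodule.map Jn1.mkQ (Ideal.span {a ^ n} ⊔ P') := by
    have h1 : LinearMap.range ((LinearMap.lsmul D D) (a ^ n)) = Ideal.span {a ^ n} := by
      ext x
      simp only [LinearMap.mem_range, LinearMap.lsmul_apply, smul_eq_mul,
        Ideal.mem_span_singleton']
      exact ⟨fun ⟨c, h⟩ => ⟨c, by rw [← h]; ring⟩, fun ⟨c, h⟩ => ⟨c, by rw [← h]; ring⟩⟩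
    have hbot : Submodule.map Jn1.mkQ P' = ⊥ := by
      refine le_bot_iff.1 ?_
      rw [← Submodule.mkQ_map_self Jn1]
      exact Submodule.map_mono le_sup_right
    rw [LinearMap.range_comp, h1, Submodule.map_sup, hbot, sup_bot_eq]
  exact ((Submodule.quotEquivOfEq _ _ hker.symm).trans φ.quotKerEquivRange).trans
    (LinearEquiv.ofEq _ _ hrange)

/-- In a Prüfer domain, a prime strictly below `P` is contained in every `P`-primary ideal. -/
lemma prime_le_primary {D : Type u} [CommRing D] [IsDomain D]
    (hD : IsPruferDomain D) {P' P Q : Ideal D}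
    (hP' : P'.IsPrime) (hP : P.IsPrime) (hlt : P' < P)
    (hQ : Q.IsPrimary) (hrad : Q.radical = P)
    {a : D} (haP : a ∈ P) (haP' : a ∉ P') : P' ≤ Q := by
  obtain ⟨M, hMmax, hPM⟩ := Ideal.exists_le_maximal P hP.ne_top
  haveI hMp : M.IsPrime := hMmax.isPrime
  haveI := hD M hMp
  have hP'M : P' ≤ M := le_trans hlt.le hPM
  obtain ⟨k, hk⟩ : ∃ k : ℕ, a ^ k ∈ Q := Ideal.mem_radical_iff.1 (hrad ▸ haP)
  intro x hx
  obtain ⟨c, hc | hc⟩ := PreValuationRing.cond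
    (algebraMap D (Localization.AtPrime M) (a ^ k)) (algebraMap D (Localization.AtPrime M) x)
  · obtain ⟨⟨d, s⟩, hds⟩ := IsLocalization.surj M.primeCompl c
    dsimp only at hds
    have heq : algebraMap D (Localization.AtPrime M) (a ^ k * d)
        = algebraMap D (Localization.AtPrime M) (x * ↑s) := by
      rw [map_mul, map_mul, ← hds, ← hc]; ring
    obtain ⟨u, hu⟩ := (IsLocalization.eq_iff_exists M.primeCompl _).1 heq
    have hmem : ((↑u * ↑s : D)) • x ∈ Q := by
      have h2 : ((↑u * ↑s : D)) • x = a ^ k * (↑u * d) := by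
        simp only [smul_eq_mul]; linear_combination -hu
      rw [h2]
      exact Q.mul_mem_right _ hk
    rcases hQ.2 hmem with h | ⟨m, hm⟩
    · exact h
    · exfalso
      have h1 : ((↑u * ↑s : D)) ^ m ∈ Q := by
        have := hm (Submodule.smul_mem_pointwise_smul (1 : D) _ ⊤ trivial)
        simpa using this
      have h2 : ((↑u * ↑s : D)) ∈ M := hPM (hrad ▸ Ideal.mem_radical_iff.2 ⟨m, h1⟩)
      rcases hMp.mem_or_mem h2 with h' | h'
      · exact u.2 h'
      · exact s.2 h'
  · exfalso
    obtain ⟨⟨d, s⟩, hds⟩ := IsLocalization.surj M.primeCompl c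
    dsimp only at hds
    have heq : algebraMap D (Localization.AtPrime M) (x * d)
        = algebraMap D (Localization.AtPrime M) (a ^ k * ↑s) := by
      rw [map_mul, map_mul, ← hds, ← hc]; ring
    obtain ⟨u, hu⟩ := (IsLocalization.eq_iff_exists M.primeCompl _).1 heq
    have hmem : a ^ k * (↑u * ↑s) ∈ P' := by
      have h2 : a ^ k * (↑u * ↑s : D) = ↑u * (x * d) := by linear_combination -hu
      rw [h2]
      exact P'.mul_mem_left _ (P'.mul_mem_right _ hx)
    rcases hP'.mem_or_mem hmem with h | h
    · exact haP' (hP'.mem_of_pow_mem k h)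
    · rcases hP'.mem_or_mem h with h' | h'
      · exact u.2 (hP'M h')
      · exact s.2 (hP'M h')

theorem prufer_length_below_totalSpectrum {D : Type u} [CommRing D] [IsDomain D]
    (hD : IsPruferDomain D) (ℓ : LengthFunction D) (P' P : Ideal D)
    (hP' : P'.IsPrime) (hP : P.IsPrime) (hlt : P' < P)
    (Q : Ideal D) (hQ : Q.IsPrimary) (hrad : Q.radical = P)
    (hpos : 0 < ℓ.toFun (D ⧸ Q)) :
    ℓ.toFun (D ⧸ P') = ⊤ := by
  obtain ⟨a, haP, haP'⟩ := SetLike.exists_of_lt hlt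
  have hPQ : P' ≤ Q := prime_le_primary hD hP' hP hlt hQ hrad haP haP'
  obtain ⟨k, hk⟩ : ∃ k : ℕ, a ^ k ∈ Q := Ideal.mem_radical_iff.1 (hrad ▸ haP)
  set ε := ℓ.toFun (D ⧸ (Ideal.span {a} ⊔ P')) with hε
  have key : ∀ n : ℕ, ℓ.toFun (D ⧸ (Ideal.span {a ^ n} ⊔ P')) = n • ε := by
    intro n
    induction n with
    | zero =>
      have htop : Ideal.span {a ^ 0} ⊔ P' = ⊤ := by
        rw [pow_zero, Ideal.span_singleton_one]; exact top_sup_eq _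
      rw [zero_smul]
      exact ℓ.zero' _ (Submodule.Quotient.subsingleton_iff.2 htop)
    | succ n ih =>
      have hle : Ideal.span {a ^ (n + 1)} ⊔ P' ≤ Ideal.span {a ^ n} ⊔ P' :=
        sup_le_sup_right (Ideal.span_singleton_le_span_singleton.2 (pow_dvd_pow a n.le_succ)) _
      rw [ℓ.quot_eq _ _ hle, ← ℓ.congr (stepEquiv hP' haP' n), ih, succ_nsmul, ← hε, add_comm]
  have h2 : ∀ n : ℕ, (n : ℝ≥0∞) * ε ≤ ℓ.toFun (D ⧸ P') := by
    intro n
    have h := ℓ.quot_mono P' (Ideal.span {a ^ n} ⊔ P') le_sup_right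
    rw [key n, nsmul_eq_mul] at h
    exact h
  have hε0 : ε ≠ 0 := by
    intro h0
    have hQle : Ideal.span {a ^ k} ⊔ P' ≤ Q :=
      sup_le ((Ideal.span_singleton_le_iff_mem Q).2 hk) hPQ
    have h1 : ℓ.toFun (D ⧸ Q) ≤ (k : ℕ) • ε := key k ▸ ℓ.quot_mono _ _ hQle
    rw [h0, smul_zero] at h1
    exact absurd (le_antisymm h1 zero_le) (ne_of_gt hpos)
  by_cases hεtop : ε = ⊤
  · have h := h2 1
    rw [Nat.cast_one, one_mul, hεtop] at h
    exact top_le_iff.1 h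
  · by_contra hne
    obtain ⟨n, hn⟩ := ENNReal.exists_nat_gt
      (ENNReal.div_lt_top hne hε0).ne
    have hle : (n : ℝ≥0∞) ≤ ℓ.toFun (D ⧸ P') / ε :=
      (ENNReal.le_div_iff_mul_le (Or.inl hε0) (Or.inl hεtop)).2 (h2 n)
    exact absurd hle (not_le.2 hn)
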